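/- Let A be a *-algebra of bounded operators on a Hilbert space H, D a selfadjoint operator with compact resolvent, and K a bounded invertible operator with bounded inverse such that K maps dom D into itself and da := K⁻¹(Da − (K⁻¹aK)D) is bounded for all a in A. Then D'' := KD satisfies: [D'', a] = K² · (da) is bounded for every a in A, so (A, H, D'') is an ordinary spectral triple. -/

import Mathlib

/-- For a twisted spectral triple `(A, H, D, K)` with `K` bounded and
boundedly invertible (modeled as a continuous linear equivalence), mapping `dom D` into
itself (here `D` is modeled as a linear map), if for `a ∈ A` the twisted one-form
`da := K⁻¹ ∘ (D ∘ a − (K⁻¹ ∘ a ∘ K) ∘ D)` is bounded, then `D'' := K ∘ D` satisfies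
`[D'', a] = K² ∘ da`, which is bounded; so `(A, H, D'')` is an ordinary spectral triple. -/
theorem stmt0
    (H : Type*) [NormedAddCommGroup H] [InnerProductSpace ℂ H] [CompleteSpace H]
    (A : Set (H →L[ℂ] H)) (hA : ∀ a ∈ A, ContinuousLinearMap.adjoint a ∈ A)
    (D : H →ₗ[ℂ] H) (hD : ∀ v w : H, (inner ℂ (D v) w : ℂ) = inner ℂ v (D w))
    (K : H ≃L[ℂ] H)
    (da : ∀ a ∈ A, H →ₗ[ℂ] H)
    (hda : ∀ a (ha : a ∈ A), (da a ha : H →ₗ[ℂ] H)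
      = (K.symm : H →ₗ[ℂ] H) ∘ₗ
        (D ∘ₗ (a : H →ₗ[ℂ] H)
          - ((K.symm : H →ₗ[ℂ] H) ∘ₗ (a : H →ₗ[ℂ] H) ∘ₗ (K : H →ₗ[ℂ] H)) ∘ₗ D))
    (hbdd : ∀ a (ha : a ∈ A), ∃ C : ℝ, ∀ v : H, ‖da a ha v‖ ≤ C * ‖v‖) :
    ∀ a (ha : a ∈ A),
      ((K : H →ₗ[ℂ] H) ∘ₗ D) ∘ₗ (a : H →ₗ[ℂ] H)
          - (a : H →ₗ[ℂ] H) ∘ₗ ((K : H →ₗ[ℂ] H) ∘ₗ D)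
        = (K : H →ₗ[ℂ] H) ∘ₗ (K : H →ₗ[ℂ] H) ∘ₗ (da a ha : H →ₗ[ℂ] H)
      ∧ ∃ C : ℝ, ∀ v : H,
          ‖(((K : H →ₗ[ℂ] H) ∘ₗ D) ∘ₗ (a : H →ₗ[ℂ] H)
            - (a : H →ₗ[ℂ] H) ∘ₗ ((K : H →ₗ[ℂ] H) ∘ₗ D)) v‖ ≤ C * ‖v‖ := by
  intro a ha
  have heq : ((K : H →ₗ[ℂ] H) ∘ₗ D) ∘ₗ (a : H →ₗ[ℂ] H)
      - (a : H →ₗ[ℂ] H) ∘ₗ ((K : H →ₗ[ℂ] H) ∘ₗ D)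
      = (K : H →ₗ[ℂ] H) ∘ₗ (K : H →ₗ[ℂ] H) ∘ₗ (da a ha : H →ₗ[ℂ] H) := by
    ext v
    simp [hda a ha, LinearMap.sub_apply, LinearMap.comp_apply]
  refine ⟨heq, ?_⟩
  obtain ⟨C, hC⟩ := hbdd a ha
  refine ⟨‖(K : H →L[ℂ] H)‖ * (‖(K : H →L[ℂ] H)‖ * C), fun v => ?_⟩
  rw [heq]
  simp only [LinearMap.comp_apply]
  calc ‖(K : H →L[ℂ] H) ((K : H →L[ℂ] H) (da a ha v))‖
      ≤ ‖(K : H →L[ℂ] H)‖ * ‖(K : H →L[ℂ] H) (da a ha v)‖ :=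
        (K : H →L[ℂ] H).le_opNorm _
    _ ≤ ‖(K : H →L[ℂ] H)‖ * (‖(K : H →L[ℂ] H)‖ * ‖da a ha v‖) := by
        gcongr; exact (K : H →L[ℂ] H).le_opNorm _
    _ ≤ ‖(K : H →L[ℂ] H)‖ * (‖(K : H →L[ℂ] H)‖ * (C * ‖v‖)) := by
        have h0 : (0:ℝ) ≤ ‖(K : H →L[ℂ] H)‖ := norm_nonneg _
        gcongr
        · exact hC v
    _ = ‖(K : H →L[ℂ] H)‖ * (‖(K : H →L[ℂ] H)‖ * C) * ‖v‖ := by ring
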